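/- Let f : I → I be continuous on a compact interval, and let J_0, J_1, ..., J_{n-1}, J_n = J_0 be closed subintervals of I with f(J_i) ⊇ J_{i+1} for i = 0, ..., n-1. Then there exists a point y such that f^i(y) ∈ J_i for i = 0, 1, ..., n-1 and f^n(y) = y. -/

import Mathlib

open Set

/-- If `f` is continuous on `[u,v]`, `f u = p`, `f v = q` with `p ≤ q`, then some
subinterval of `[u,v]` is mapped by `f` exactly onto `[p,q]`. -/
lemma onto_sub_aux (f : ℝ → ℝ) (u v p q : ℝ) (huv : u ≤ v)
    (hf : ContinuousOn f (Icc u v)) (hpq : p ≤ q) (hu : f u = p) (hv : f v = q) :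
    ∃ c d, u ≤ c ∧ c ≤ d ∧ d ≤ v ∧ f '' Icc c d = Icc p q := by
  set S : Set ℝ := Icc u v ∩ f ⁻¹' {p} with hS
  have hScl : IsClosed S := hf.preimage_isClosed_of_isClosed isClosed_Icc isClosed_singleton
  have hScp : IsCompact S := isCompact_Icc.of_isClosed_subset hScl inter_subset_left
  obtain ⟨c, hcS, hcmax⟩ := hScp.exists_isGreatest ⟨u, ⟨le_rfl, huv⟩, hu⟩
  have hcu : u ≤ c := hcS.1.1
  have hcv : c ≤ v := hcS.1.2
  have hfc : f c = p := hcS.2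
  set T : Set ℝ := Icc c v ∩ f ⁻¹' {q} with hT
  have hTcl : IsClosed T :=
    (hf.mono (Icc_subset_Icc hcu le_rfl)).preimage_isClosed_of_isClosed isClosed_Icc
      isClosed_singleton
  have hTcp : IsCompact T := isCompact_Icc.of_isClosed_subset hTcl inter_subset_left
  obtain ⟨d, hdT, hdmin⟩ := hTcp.exists_isLeast ⟨v, ⟨hcv, le_rfl⟩, hv⟩
  have hcd : c ≤ d := hdT.1.1
  have hdv : d ≤ v := hdT.1.2
  have hfd : f d = q := hdT.2
  refine ⟨c, d, hcu, hcd, hdv, le_antisymm ?_ ?_⟩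
  · rintro _ ⟨x, hx, rfl⟩
    constructor
    · by_contra h
      push_neg at h
      obtain ⟨z, hz, hfz⟩ := intermediate_value_Icc hx.2
        (hf.mono (Icc_subset_Icc (hcu.trans hx.1) hdv)) ⟨h.le, hfd ▸ hpq⟩
      have hzc : z ≤ c := hcmax ⟨⟨hcu.trans (hx.1.trans hz.1), hz.2.trans hdv⟩, hfz⟩
      have : x = c := le_antisymm (hz.1.trans hzc) hx.1
      rw [this, hfc] at h; exact lt_irrefl _ h
    · by_contra h
      push_neg at h
      obtain ⟨z, hz, hfz⟩ := intermediate_value_Icc hx.1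
        (hf.mono (Icc_subset_Icc hcu (hx.2.trans hdv))) ⟨hfc ▸ hpq, h.le⟩
      have hdz : d ≤ z := hdmin ⟨⟨hz.1, (hz.2.trans hx.2).trans hdv⟩, hfz⟩
      have : x = d := le_antisymm hx.2 (hdz.trans hz.2)
      rw [this, hfd] at h; exact lt_irrefl _ h
  · have := intermediate_value_Icc hcd (hf.mono (Icc_subset_Icc hcu hdv))
    rwa [hfc, hfd] at this

/-- Orientation-reversed version of `onto_sub_aux`. -/
lemma onto_sub_aux' (f : ℝ → ℝ) (u v p q : ℝ) (huv : u ≤ v)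
    (hf : ContinuousOn f (Icc u v)) (hpq : p ≤ q) (hu : f u = q) (hv : f v = p) :
    ∃ c d, u ≤ c ∧ c ≤ d ∧ d ≤ v ∧ f '' Icc c d = Icc p q := by
  set g : ℝ → ℝ := fun x => f (u + v - x) with hg
  have hmaps : MapsTo (fun x => u + v - x) (Icc u v) (Icc u v) := by
    intro x hx
    simp only [mem_Icc] at hx ⊢
    constructor <;> linarith [hx.1, hx.2]
  have hgc : ContinuousOn g (Icc u v) :=
    hf.comp (Continuous.continuousOn (by continuity)) hmaps
  have hgu : g u = p := by simp [hg, hv]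
  have hgv : g v = q := by simp [hg, hu]
  obtain ⟨c, d, h1, h2, h3, h4⟩ := onto_sub_aux g u v p q huv hgc hpq hgu hgv
  refine ⟨u + v - d, u + v - c, by linarith, by linarith, by linarith, ?_⟩
  have himg : Icc (u + v - d) (u + v - c) = (fun x => (u + v) - x) '' Icc c d := by
    rw [Set.image_const_sub_Icc]
  rw [himg, ← Set.image_comp, ← h4]
  rfl

/-- If `f` is continuous on `[c,d]` and `[p,q] ⊆ f '' [c,d]`, then some subinterval
of `[c,d]` is mapped exactly onto `[p,q]`. -/
lemma onto_sub (f : ℝ → ℝ) (c d p q : ℝ) (hf : ContinuousOn f (Icc c d))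
    (hpq : p ≤ q) (h : Icc p q ⊆ f '' Icc c d) :
    ∃ c' d', c ≤ c' ∧ c' ≤ d' ∧ d' ≤ d ∧ f '' Icc c' d' = Icc p q := by
  obtain ⟨u, hu, hfu⟩ := h ⟨le_rfl, hpq⟩
  obtain ⟨v, hv, hfv⟩ := h ⟨hpq, le_rfl⟩
  rcases le_total u v with huv | hvu
  · obtain ⟨c', d', h1, h2, h3, h4⟩ := onto_sub_aux f u v p q huv
      (hf.mono (Icc_subset_Icc hu.1 hv.2)) hpq hfu hfv
    exact ⟨c', d', hu.1.trans h1, h2, h3.trans hv.2, h4⟩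
  · obtain ⟨c', d', h1, h2, h3, h4⟩ := onto_sub_aux' f v u p q hvu
      (hf.mono (Icc_subset_Icc hv.1 hu.2)) hpq hfv hfu
    exact ⟨c', d', hv.1.trans h1, h2, h3.trans hu.2, h4⟩

lemma iter_contOn {f : ℝ → ℝ} {s : Set ℝ} (hf : ContinuousOn f s)
    (hmaps : MapsTo f s s) (k : ℕ) : ContinuousOn f^[k] s := by
  induction k with
  | zero => simpa using continuousOn_id
  | succ k ih =>
    rw [Function.iterate_succ']
    exact hf.comp ih (hmaps.iterate k)

theorem stmt_4 (a b : ℝ) (hab : a ≤ b) (f : ℝ → ℝ)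
    (hf : ContinuousOn f (Set.Icc a b))
    (hmaps : Set.MapsTo f (Set.Icc a b) (Set.Icc a b))
    (n : ℕ) (hn : 0 < n) (p q : ℕ → ℝ)
    (hpq : ∀ i ≤ n, p i ≤ q i)
    (hsub : ∀ i ≤ n, Set.Icc (p i) (q i) ⊆ Set.Icc a b)
    (hclosep : p n = p 0) (hcloseq : q n = q 0)
    (hcover : ∀ i < n, Set.Icc (p (i + 1)) (q (i + 1)) ⊆ f '' Set.Icc (p i) (q i)) :
    ∃ y, (∀ i < n, f^[i] y ∈ Set.Icc (p i) (q i)) ∧ f^[n] y = y := by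
  have main : ∀ i, i ≤ n → ∃ c d, c ≤ d ∧ Icc c d ⊆ Icc (p 0) (q 0) ∧
      (∀ j ≤ i, f^[j] '' Icc c d ⊆ Icc (p j) (q j)) ∧
      f^[i] '' Icc c d = Icc (p i) (q i) := by
    intro i
    induction i with
    | zero =>
      intro _
      refine ⟨p 0, q 0, hpq 0 (Nat.zero_le n), subset_rfl, ?_, by simp⟩
      intro j hj
      interval_cases j
      simp
    | succ i ih =>
      intro hi
      obtain ⟨c, d, hcd, hsub0, hall, hlast⟩ := ih (Nat.le_of_succ_le hi)
      have hsubab : Icc c d ⊆ Icc a b := hsub0.trans (hsub 0 (Nat.zero_le n))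
      have hcont : ContinuousOn f^[i + 1] (Icc c d) :=
        (iter_contOn hf hmaps (i + 1)).mono hsubab
      have himage : Icc (p (i + 1)) (q (i + 1)) ⊆ f^[i + 1] '' Icc c d := by
        rw [Function.iterate_succ', Set.image_comp f f^[i], hlast]
        exact hcover i hi
      obtain ⟨c', d', h1, h2, h3, h4⟩ := onto_sub f^[i + 1] c d (p (i + 1)) (q (i + 1))
        hcont (hpq (i + 1) hi) himage
      have hsub' : Icc c' d' ⊆ Icc c d := Icc_subset_Icc h1 h3
      refine ⟨c', d', h2, hsub'.trans hsub0, ?_, h4⟩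
      intro j hj
      rcases Nat.lt_or_ge j (i + 1) with hj' | hj'
      · exact (Set.image_mono (f := _) hsub').trans (hall j (Nat.lt_succ_iff.mp hj'))
      · have : j = i + 1 := le_antisymm hj hj'
        rw [this, h4]
  obtain ⟨c, d, hcd, hsub0, hall, hlast⟩ := main n le_rfl
  rw [hclosep, hcloseq] at hlast
  -- f^[n] maps [c,d] onto [p 0, q 0] ⊇ [c,d]; find a fixed point
  have hcont : ContinuousOn f^[n] (Icc c d) :=
    (iter_contOn hf hmaps n).mono (hsub0.trans (hsub 0 (Nat.zero_le n)))
  have hc : c ∈ f^[n] '' Icc c d := hlast ▸ hsub0 ⟨le_rfl, hcd⟩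
  have hd : d ∈ f^[n] '' Icc c d := hlast ▸ hsub0 ⟨hcd, le_rfl⟩
  obtain ⟨u, hu, hfu⟩ := hc
  obtain ⟨v, hv, hfv⟩ := hd
  set g : ℝ → ℝ := fun x => f^[n] x - x with hg
  have hgcont : ContinuousOn g (uIcc u v) :=
    ((hcont.mono (uIcc_subset_Icc hu hv)).sub continuousOn_id)
  have h0 : (0 : ℝ) ∈ uIcc (g u) (g v) := by
    have h1 : g u ≤ 0 := by simp [hg, hfu]; linarith [hu.1]
    have h2 : 0 ≤ g v := by simp [hg, hfv]; linarith [hv.2]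
    exact Set.mem_uIcc.2 (Or.inl ⟨h1, h2⟩)
  obtain ⟨y, hy, hgy⟩ := intermediate_value_uIcc hgcont h0
  have hymem : y ∈ Icc c d := uIcc_subset_Icc hu hv hy
  have hfix : f^[n] y = y := by
    have : f^[n] y - y = 0 := hgy
    linarith
  refine ⟨y, ?_, hfix⟩
  intro i hi
  exact hall i hi.le ⟨y, hymem, rfl⟩
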